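/- Suppose R contains ℚ (R is a ℚ-algebra) and let λ : R[X_1,…,X_N] → R be an R-linear map such that λ(M_{jk}(p)) = 0 for all pairs of distinct indices j, k ∈ {1,…,N} and all p, and λ((X·X)^n) = 1 for every integer n ≥ 0. If p ∈ R[X_1,…,X_N] is homogeneous of degree 2n with n ≥ 1, then n!·2^n·(Π_{i=1}^{n}(2n+N−2i))·λ(p) equals the constant coefficient of Δ^n p (the n-fold iterated Laplacian of p, which is a constant polynomial). -/

import Mathlib

open MvPolynomial

/-- The rotation generator `M_{jk} p = X_j ∂_k p − X_k ∂_j p`. -/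
noncomputable def rot {R : Type*} [CommRing R] {N : ℕ} (j k : Fin N)
    (p : MvPolynomial (Fin N) R) : MvPolynomial (Fin N) R :=
  X j * pderiv k p - X k * pderiv j p

/-- The Laplacian `Δ p = Σ_j ∂_j² p`. -/
noncomputable def lap {R : Type*} [CommRing R] {N : ℕ}
    (p : MvPolynomial (Fin N) R) : MvPolynomial (Fin N) R :=
  ∑ j, pderiv j (pderiv j p)

/-- The polynomial `X·X = X_1² + ⋯ + X_N²`. -/
noncomputable def XX (R : Type*) [CommRing R] (N : ℕ) : MvPolynomial (Fin N) R :=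
  ∑ j, X j ^ 2

section part2


variable {R : Type*} [CommRing R] {N : ℕ}

private lemma sum_univ_eq_degree (s : Fin N →₀ ℕ) : ∑ i, s i = s.degree :=
  (Finset.sum_subset (Finset.subset_univ _) fun _ _ hx =>
    Finsupp.notMem_support_iff.mp hx).symm

private lemma euler_monomial (s : Fin N →₀ ℕ) (a : R) :
    ∑ i, X i * pderiv i (monomial s a) = s.degree • monomial s a := by
  have h : ∀ i : Fin N, X i * pderiv i (monomial s a) = (s i) • monomial s a := by
    intro i
    rw [pderiv_monomial]
    rcases Nat.eq_zero_or_pos (s i) with h0 | h0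
    · simp [h0]
    · have hs : Finsupp.single i 1 + (s - Finsupp.single i 1) = s := by
        ext j
        simp only [Finsupp.coe_add, Finsupp.coe_tsub, Pi.add_apply, Pi.sub_apply,
          Finsupp.single_apply]
        rcases eq_or_ne i j with rfl | hij
        · simp; omega
        · simp [hij]
      rw [X, monomial_mul, hs, one_mul, smul_monomial]
      congr 1
      rw [nsmul_eq_mul, mul_comm]
  rw [Finset.sum_congr rfl fun i _ => h i, ← Finset.sum_smul, sum_univ_eq_degree]

private lemma euler {d : ℕ} {p : MvPolynomial (Fin N) R} (hp : p.IsHomogeneous d) :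
    ∑ i, X i * pderiv i p = d • p := by
  conv_lhs => rw [← p.support_sum_monomial_coeff]
  have : ∀ i : Fin N, X i * pderiv i (∑ v ∈ p.support, monomial v (coeff v p))
      = ∑ v ∈ p.support, X i * pderiv i (monomial v (coeff v p)) := by
    intro i; rw [map_sum, Finset.mul_sum]
  rw [Finset.sum_congr rfl fun i _ => this i, Finset.sum_comm]
  have h2 : ∀ v ∈ p.support, ∑ i : Fin N, X i * pderiv i (monomial v (coeff v p))
      = d • monomial v (coeff v p) := by
    intro v hv
    rw [euler_monomial]
    congr 1
    rw [Finsupp.degree_eq_weight_one]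
    exact hp (mem_support_iff.mp hv)
  rw [Finset.sum_congr rfl h2, ← Finset.smul_sum, p.support_sum_monomial_coeff]

private lemma isHomogeneous_pderiv {d : ℕ} {p : MvPolynomial (Fin N) R}
    (hp : p.IsHomogeneous (d + 1)) (i : Fin N) : (pderiv i p).IsHomogeneous d := by
  conv_lhs => rw [← p.support_sum_monomial_coeff]
  rw [map_sum]
  apply IsHomogeneous.sum
  intro v hv
  rw [pderiv_monomial]
  rcases eq_or_ne (v i) 0 with h0 | h0
  · rw [h0]; simp only [Nat.cast_zero, mul_zero, monomial_zero]
    exact isHomogeneous_zero _ _ _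
  · apply isHomogeneous_monomial
    have hdeg : v.degree = d + 1 := by
      rw [Finsupp.degree_eq_weight_one]
      exact hp (mem_support_iff.mp hv)
    rw [← sum_univ_eq_degree] at hdeg ⊢
    rw [← Finset.sum_erase_add _ _ (Finset.mem_univ i)] at hdeg
    rw [← Finset.sum_erase_add _ _ (Finset.mem_univ i)]
    have h2 : ∀ j ∈ Finset.univ.erase i, (v - Finsupp.single i 1 : Fin N →₀ ℕ) j = v j := by
      intro j hj
      rw [Finsupp.tsub_apply, Finsupp.single_apply,
        if_neg (Finset.ne_of_mem_erase hj).symm, Nat.sub_zero]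
    rw [Finset.sum_congr rfl h2, Finsupp.tsub_apply, Finsupp.single_apply, if_pos rfl]
    show ∑ x ∈ Finset.univ.erase i, v x + (v i - 1) = d
    omega


variable {R : Type*} [CommRing R] {N : ℕ}

private lemma XX_isHom : (XX R N).IsHomogeneous 2 :=
  IsHomogeneous.sum _ _ _ fun j _ => isHomogeneous_X_pow j 2

private lemma pderiv_XX (i : Fin N) : pderiv i (XX R N) = 2 * X i := by
  rw [XX, map_sum, Finset.sum_eq_single i]
  · rw [pderiv_pow, pderiv_X_self]
    push_cast
    ring
  · intro j _ hj
    rw [pderiv_pow, pderiv_X_of_ne hj, mul_zero]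
  · intro h; exact absurd (Finset.mem_univ i) h

private lemma lap_XX_mul {D : ℕ} {q : MvPolynomial (Fin N) R} (hq : q.IsHomogeneous D) :
    lap (XX R N * q) = XX R N * lap q + (2 * N + 4 * D) • q := by
  have h1 : ∀ j : Fin N, pderiv j (XX R N * q)
      = (2 : ℕ) • (X j * q) + XX R N * pderiv j q := by
    intro j
    rw [pderiv_mul, pderiv_XX, nsmul_eq_mul]
    push_cast
    ring
  have h2 : ∀ j : Fin N, pderiv j (pderiv j (XX R N * q))
      = (2 : ℕ) • q + (4 : ℕ) • (X j * pderiv j q) + XX R N * pderiv j (pderiv j q) := by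
    intro j
    rw [h1, map_add, map_nsmul, pderiv_mul, pderiv_X_self, pderiv_mul, pderiv_XX,
      nsmul_eq_mul, nsmul_eq_mul, nsmul_eq_mul]
    push_cast
    ring
  rw [lap, Finset.sum_congr rfl fun j _ => h2 j]
  rw [Finset.sum_add_distrib, Finset.sum_add_distrib, Finset.sum_const, ← Finset.smul_sum,
    ← Finset.mul_sum, euler hq]
  rw [Finset.card_univ, Fintype.card_fin]
  rw [show (∑ i, pderiv i (pderiv i q)) = lap q from rfl]
  rw [smul_smul, smul_smul]
  rw [← add_smul, add_comm]
  congr 2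
  ring

private lemma lap_XX_pow_mul {d : ℕ} {p : MvPolynomial (Fin N) R} (hp : p.IsHomogeneous d) :
    ∀ k : ℕ, lap (XX R N ^ (k + 1) * p)
      = XX R N ^ (k + 1) * lap p
        + ((2 * (k + 1)) * (2 * k + 2 * d + N)) • (XX R N ^ k * p) := by
  intro k
  induction k with
  | zero =>
    rw [pow_one, pow_zero, one_mul, lap_XX_mul hp]
    congr 2
    ring
  | succ k ih =>
    have hq : (XX R N ^ (k + 1) * p).IsHomogeneous (2 * (k + 1) + d) :=
      (IsHomogeneous.pow XX_isHom (k + 1)).mul hp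
    rw [show XX R N ^ (k + 2) = XX R N * XX R N ^ (k + 1) from (pow_succ' _ _),
      mul_assoc, lap_XX_mul hq, ih]
    rw [mul_add, mul_smul_comm, ← mul_assoc, ← pow_succ', ← mul_assoc, ← pow_succ']
    rw [add_assoc, ← add_smul]
    congr 2
    ring

private lemma lemA {lam : MvPolynomial (Fin N) R →ₗ[R] R}
    (hrot : ∀ (j k : Fin N), j ≠ k → ∀ p, lam (rot j k p) = 0)
    {d : ℕ} {p : MvPolynomial (Fin N) R} (hp : p.IsHomogeneous (d + 1)) :
    lam (XX R N * lap p) + (2 * (d + 1)) • lam p = ((d + 1) * (d + 1 + N)) • lam p := by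
  have hpd : ∀ i : Fin N, (pderiv i p).IsHomogeneous d := isHomogeneous_pderiv hp
  have key : ∀ j k : Fin N,
      lam (X j ^ 2 * pderiv k (pderiv k p))
        + (if j = k then lam (X j * pderiv j p) else 0)
      = lam (X k * pderiv k p) + lam (X j * (X k * pderiv j (pderiv k p))) := by
    intro j k
    by_cases hjk : j = k
    · subst hjk
      rw [if_pos rfl, show X j ^ 2 * pderiv j (pderiv j p)
        = X j * (X j * pderiv j (pderiv j p)) from by ring, add_comm]
    · rw [if_neg hjk, add_zero]
      have h0 := hrot j k hjk (X j * pderiv k p)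
      rw [rot] at h0
      rw [pderiv_mul, pderiv_X_of_ne hjk, zero_mul, zero_add] at h0
      rw [pderiv_mul, pderiv_X_self, one_mul] at h0
      rw [map_sub, sub_eq_zero] at h0
      rw [show X j ^ 2 * pderiv k (pderiv k p)
        = X j * (X j * pderiv k (pderiv k p)) from by ring, h0,
        show X k * (pderiv k p + X j * pderiv j (pderiv k p))
        = X k * pderiv k p + X j * (X k * pderiv j (pderiv k p)) from by ring, map_add]
  have hsum : ∑ j : Fin N, ∑ k : Fin N,
      (lam (X j ^ 2 * pderiv k (pderiv k p))
        + (if j = k then lam (X j * pderiv j p) else 0))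
      = ∑ j : Fin N, ∑ k : Fin N,
        (lam (X k * pderiv k p) + lam (X j * (X k * pderiv j (pderiv k p)))) :=
    Finset.sum_congr rfl fun j _ => Finset.sum_congr rfl fun k _ => key j k
  have hE : ∑ j : Fin N, lam (X j * pderiv j p) = (d + 1) • lam p := by
    rw [← map_sum, euler hp, map_nsmul]
  have S1 : ∑ j : Fin N, ∑ k : Fin N, lam (X j ^ 2 * pderiv k (pderiv k p))
      = lam (XX R N * lap p) := by
    rw [XX, lap, Finset.sum_mul_sum, map_sum]
    exact Finset.sum_congr rfl fun j _ => (map_sum lam _ _).symm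
  have S4 : ∑ j : Fin N, ∑ k : Fin N, lam (X j * (X k * pderiv j (pderiv k p)))
      = (d * (d + 1)) • lam p := by
    rw [Finset.sum_comm]
    have inner : ∀ k : Fin N, ∑ j : Fin N, lam (X j * (X k * pderiv j (pderiv k p)))
        = d • lam (X k * pderiv k p) := by
      intro k
      rw [← map_sum]
      have : ∑ j : Fin N, X j * (X k * pderiv j (pderiv k p))
          = X k * ∑ j : Fin N, X j * pderiv j (pderiv k p) := by
        rw [Finset.mul_sum]
        exact Finset.sum_congr rfl fun j _ => by ring
      rw [this, euler (hpd k), mul_smul_comm, map_nsmul]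
    rw [Finset.sum_congr rfl fun k _ => inner k, ← Finset.smul_sum, hE, smul_smul]
  simp only [Finset.sum_add_distrib] at hsum
  simp only [Finset.sum_ite_eq, Finset.mem_univ, if_true] at hsum
  simp only [Finset.sum_const, Finset.card_univ, Fintype.card_fin] at hsum
  rw [S1, S4, hE] at hsum
  simp only [nsmul_eq_mul, smul_eq_mul] at hsum ⊢
  push_cast at hsum ⊢
  linear_combination hsum

private lemma lap_isHom {d : ℕ} {q : MvPolynomial (Fin N) R}
    (hq : q.IsHomogeneous (d + 2)) : (lap q).IsHomogeneous d :=
  IsHomogeneous.sum _ _ _ fun i _ =>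
    isHomogeneous_pderiv (isHomogeneous_pderiv hq i) i

private lemma main_ind {lam : MvPolynomial (Fin N) R →ₗ[R] R}
    (hrot : ∀ (j k : Fin N), j ≠ k → ∀ p, lam (rot j k p) = 0)
    (hone : ∀ n : ℕ, lam (XX R N ^ n) = 1) :
    ∀ (m k : ℕ) (p : MvPolynomial (Fin N) R), p.IsHomogeneous (2 * m) →
      (m.factorial * 2 ^ m * ∏ j ∈ Finset.range m, (2 * j + N)) • lam (XX R N ^ k * p)
        = constantCoeff (lap^[m] p) := by
  intro m
  induction m with
  | zero =>
    intro k p hp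
    have hC : p = C (constantCoeff p) := by
      ext v
      rcases eq_or_ne v 0 with rfl | hv
      · simp [constantCoeff_eq]
      · rw [coeff_C, if_neg (Ne.symm hv)]
        exact hp.coeff_eq_zero (by
          rw [Ne, Nat.mul_zero, Finsupp.degree_eq_zero_iff]
          exact hv)
    rw [hC]
    simp only [Nat.factorial_zero, pow_zero, Finset.prod_range_zero, one_mul,
      Function.iterate_zero_apply, one_smul, constantCoeff_C]
    rw [mul_comm, ← smul_eq_C_mul, map_smul, hone k, smul_eq_mul, mul_one]
  | succ m ih =>
    intro k p hp
    have hp2 : p.IsHomogeneous (2 * m + 1 + 1) := by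
      rw [show 2 * m + 1 + 1 = 2 * (m + 1) by ring]; exact hp
    have hlap : (lap p).IsHomogeneous (2 * m) := lap_isHom hp2
    have hcc : constantCoeff (lap^[m + 1] p) = constantCoeff (lap^[m] (lap p)) := by
      rw [Function.iterate_succ_apply]
    set Dm := m.factorial * 2 ^ m * ∏ j ∈ Finset.range m, (2 * j + N) with hDmdef
    have hDm : (m + 1).factorial * 2 ^ (m + 1) * ∏ j ∈ Finset.range (m + 1), (2 * j + N)
        = Dm * ((2 * m + 2) * (2 * m + N)) := by
      rw [hDmdef, Finset.prod_range_succ, Nat.factorial_succ, pow_succ]; ring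
    rw [hDm, hcc]
    cases k with
    | zero =>
      have F1 := lemA hrot hp2
      have F2 := ih 1 (lap p) hlap
      rw [pow_one] at F2
      rw [pow_zero, one_mul, ← F2]
      simp only [nsmul_eq_mul, smul_eq_mul] at F1 ⊢
      push_cast at F1 ⊢
      linear_combination (-((Dm : ℕ) : R)) * F1
    | succ k' =>
      have hq : (XX R N ^ (k' + 1) * p).IsHomogeneous (2 * k' + 2 * m + 3 + 1) := by
        rw [show 2 * k' + 2 * m + 3 + 1 = 2 * (k' + 1) + (2 * m + 1 + 1) by ring]
        exact (IsHomogeneous.pow XX_isHom (k' + 1)).mul hp2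
      have F1 := lemA hrot hq
      have F3 := lap_XX_pow_mul hp2 k'
      have F2 := ih (k' + 2) (lap p) hlap
      have F4 : lam (XX R N * lap (XX R N ^ (k' + 1) * p))
          = lam (XX R N ^ (k' + 2) * lap p)
            + ((2 * (k' + 1)) * (2 * k' + 2 * (2 * m + 1 + 1) + N))
              • lam (XX R N ^ (k' + 1) * p) := by
        rw [F3, mul_add, ← mul_assoc, ← pow_succ', mul_smul_comm, ← mul_assoc, ← pow_succ',
          map_add, map_nsmul]
      rw [← F2]
      simp only [nsmul_eq_mul, smul_eq_mul] at F1 F4 ⊢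
      push_cast at F1 F4 ⊢
      linear_combination ((Dm : ℕ) : R) * F4 - ((Dm : ℕ) : R) * F1

end part2


/-- for `p` homogeneous of degree `2n` (`n ≥ 1`),
`n!·2^n·Π_{i=1}^{n}(2n+N−2i)·λ(p)` equals the constant coefficient of `Δ^n p`. -/
theorem stmt17 {R : Type*} [CommRing R] [Algebra ℚ R] {N : ℕ} (hN : 2 ≤ N)
    (lam : MvPolynomial (Fin N) R →ₗ[R] R)
    (hrot : ∀ (j k : Fin N), j ≠ k → ∀ p, lam (rot j k p) = 0)
    (hone : ∀ n : ℕ, lam (XX R N ^ n) = 1)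
    (n : ℕ) (hn : 1 ≤ n)
    (p : MvPolynomial (Fin N) R) (hp : p.IsHomogeneous (2 * n)) :
    (n.factorial * 2 ^ n * ∏ i ∈ Finset.range n, (2 * n + N - 2 * (i + 1))) • lam p =
      constantCoeff (lap^[n] p) := by
  have key := main_ind hrot hone n 0 p hp
  rw [pow_zero, one_mul] at key
  have hprod : ∏ i ∈ Finset.range n, (2 * n + N - 2 * (i + 1))
      = ∏ j ∈ Finset.range n, (2 * j + N) := by
    calc ∏ i ∈ Finset.range n, (2 * n + N - 2 * (i + 1))
        = ∏ i ∈ Finset.range n, (2 * (n - 1 - i) + N) :=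
          Finset.prod_congr rfl fun i hi => by
            have := Finset.mem_range.mp hi; omega
      _ = ∏ j ∈ Finset.range n, (2 * j + N) :=
          Finset.prod_range_reflect (fun j => 2 * j + N) n
  rw [hprod]
  exact key
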